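/- Let ψ ∈ ℂᵐ be a unit vector, let P be an orthogonal projector on ℂᵐ, and set x = 1 − ⟨ψ, Pψ⟩ (a real number in [0,1]). Then the trace norm of the difference between the rank-one projector onto ψ and its compression by P satisfies the exact identity: ‖ ψψ† − P·ψψ†·P ‖₁ = √(x(4 − 3x)). -/

import Mathlib

open Matrix
open scoped ComplexOrder
variable {m : ℕ}

lemma vmv_add_left (a b cv : Fin m → ℂ) :
    vecMulVec (a + b) cv = vecMulVec a cv + vecMulVec b cv := by
  ext i j; simp [vecMulVec_apply, add_mul]

lemma vmv_add_right (a bv cv : Fin m → ℂ) :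
    vecMulVec a (bv + cv) = vecMulVec a bv + vecMulVec a cv := by
  ext i j; simp [vecMulVec_apply, mul_add]

lemma vmv_sub_left (a b cv : Fin m → ℂ) :
    vecMulVec (a - b) cv = vecMulVec a cv - vecMulVec b cv := by
  ext i j; simp [vecMulVec_apply, sub_mul]

lemma vmv_sub_right (a bv cv : Fin m → ℂ) :
    vecMulVec a (bv - cv) = vecMulVec a bv - vecMulVec a cv := by
  ext i j; simp [vecMulVec_apply, mul_sub]

lemma habs (t : ℝ) (ht : 0 ≤ t) (w : Fin m → ℂ) :
    vecMulVec (((Real.sqrt t : ℝ) : ℂ) • w) (star (((Real.sqrt t : ℝ) : ℂ) • w))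
      = ((t : ℝ) : ℂ) • vecMulVec w (star w) := by
  ext i j
  simp only [vecMulVec_apply, Pi.smul_apply, Pi.star_apply, star_smul, smul_eq_mul,
    Matrix.smul_apply, Complex.star_def, Complex.conj_ofReal]
  rw [show ((Real.sqrt t : ℂ)) * w i * ((Real.sqrt t : ℂ) * (starRingEnd ℂ) (w j))
      = ((Real.sqrt t : ℂ) * (Real.sqrt t : ℂ)) * (w i * (starRingEnd ℂ) (w j)) by ring,
    ← Complex.ofReal_mul, Real.mul_self_sqrt ht]

lemma vmv_mul_vmv (a b c d : Fin m → ℂ) :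
    vecMulVec a b * vecMulVec c d = (b ⬝ᵥ c) • vecMulVec a d := by
  ext i j
  simp only [mul_apply, vecMulVec_apply, Matrix.smul_apply, smul_eq_mul, dotProduct, Finset.sum_mul]
  exact Finset.sum_congr rfl fun k _ => by ring

lemma mul_vmv (P : Matrix (Fin m) (Fin m) ℂ) (a b : Fin m → ℂ) :
    P * vecMulVec a b = vecMulVec (P *ᵥ a) b := by
  ext i j
  simp only [mul_apply, vecMulVec_apply, mulVec, dotProduct, Finset.sum_mul]
  exact Finset.sum_congr rfl fun k _ => by ring

lemma vmv_mul (P : Matrix (Fin m) (Fin m) ℂ) (a b : Fin m → ℂ) :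
    vecMulVec a b * P = vecMulVec a (b ᵥ* P) := by
  ext i j
  simp only [mul_apply, vecMulVec_apply, vecMul, dotProduct, Finset.mul_sum]
  exact Finset.sum_congr rfl fun k _ => by ring

lemma trace_vmv (a b : Fin m → ℂ) : (vecMulVec a b).trace = b ⬝ᵥ a := by
  simp [trace, diag, vecMulVec_apply, dotProduct, mul_comm]

lemma psd_vmv (a : Fin m → ℂ) : PosSemidef (vecMulVec a (star a)) := by
  exact posSemidef_vecMulVec_self_star a

lemma vmv_herm (a : Fin m → ℂ) : (vecMulVec a (star a))ᴴ = vecMulVec a (star a) := by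
  ext i j; simp [conjTranspose_apply, vecMulVec_apply, mul_comm]

lemma key (ψ φ : Fin m → ℂ) (ch Pc Qc : ℂ)
    (hψψ : star ψ ⬝ᵥ ψ = 1) (hψφ : star ψ ⬝ᵥ φ = ch)
    (hφψ : star φ ⬝ᵥ ψ = ch) (hφφ : star φ ⬝ᵥ φ = ch)
    (f1 : Pc^2 + 2*Pc*Qc*ch + Qc^2*ch = 1)
    (f2 : Pc*Qc*(1+ch) + (Pc^2+Qc^2)*ch = -ch)
    (f3 : Qc^2 + 2*Pc*Qc*ch + Pc^2*ch = ch) :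
    (Pc • (vecMulVec ψ (star ψ) + vecMulVec φ (star φ))
      + Qc • (vecMulVec ψ (star φ) + vecMulVec φ (star ψ)))
    * (Pc • (vecMulVec ψ (star ψ) + vecMulVec φ (star φ))
      + Qc • (vecMulVec ψ (star φ) + vecMulVec φ (star ψ)))
    = (vecMulVec ψ (star ψ) - vecMulVec φ (star φ))
      * (vecMulVec ψ (star ψ) - vecMulVec φ (star φ)) := by
  simp only [add_mul, mul_add, sub_mul, mul_sub, smul_mul_assoc, mul_smul_comm,
    vmv_mul_vmv, hψψ, hψφ, hφψ, hφφ, smul_smul, one_smul]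
  match_scalars
  · linear_combination f1
  · linear_combination f2
  · linear_combination f2
  · linear_combination f3

noncomputable def traceNorm {m n : Type*} [Fintype m] [Fintype n] [DecidableEq n]
    (A : Matrix m n ℂ) : ℝ :=
  (((Matrix.posSemidef_conjTranspose_mul_self A).1.eigenvectorUnitary : Matrix n n ℂ) *
      Matrix.diagonal ((fun r : ℝ => (r : ℂ)) ∘ (√·) ∘ (Matrix.posSemidef_conjTranspose_mul_self A).1.eigenvalues) *
      (star (Matrix.posSemidef_conjTranspose_mul_self A).1.eigenvectorUnitary : Matrix n n ℂ)).trace.re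

open scoped MatrixOrder in
lemma traceNorm_eq_of_sq {A S : Matrix (Fin m) (Fin m) ℂ} (hS : S.PosSemidef)
    (h : S ^ 2 = Aᴴ * A) : traceNorm A = S.trace.re := by
  have hpsd := Matrix.posSemidef_conjTranspose_mul_self A
  have h1 : CFC.sqrt (Aᴴ * A) = S := CFC.sqrt_unique (by rw [← sq]; exact h) hS.nonneg
  rw [CFC.sqrt_eq_cfc, cfc_nnreal_eq_real _ _ hpsd.nonneg, hpsd.1.cfc_eq] at h1
  rw [← h1, traceNorm, IsHermitian.cfc, Unitary.conjStarAlgAut_apply]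
  simp only [Function.comp_def]
  simp [Real.coe_sqrt, Real.coe_toNNReal', hpsd.eigenvalues_nonneg]

theorem traceNorm_projector_compression
    {m : ℕ} (ψ : Fin m → ℂ) (hψ : star ψ ⬝ᵥ ψ = 1)
    (P : Matrix (Fin m) (Fin m) ℂ) (hPherm : P.IsHermitian) (hPproj : P * P = P) :
    traceNorm (Matrix.vecMulVec ψ (star ψ) - P * Matrix.vecMulVec ψ (star ψ) * P)
      = Real.sqrt ((1 - (star ψ ⬝ᵥ (P *ᵥ ψ)).re) *
          (4 - 3 * (1 - (star ψ ⬝ᵥ (P *ᵥ ψ)).re))) := by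
  set φ : Fin m → ℂ := P *ᵥ ψ with hφdef
  set ch : ℂ := star ψ ⬝ᵥ (P *ᵥ ψ) with hchdef
  set c : ℝ := ch.re with hcdef
  have hstarφ : star φ = star ψ ᵥ* P := by
    rw [hφdef, star_mulVec, hPherm.eq]
  have h3 : star φ ⬝ᵥ ψ = ch := by
    rw [hstarφ, ← dotProduct_mulVec, ← hchdef]
  have h4 : star φ ⬝ᵥ φ = ch := by
    rw [hstarφ, hφdef, dotProduct_mulVec, vecMul_vecMul, hPproj, ← dotProduct_mulVec, ← hchdef]
  have h2 : star ψ ⬝ᵥ φ = ch := rfl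
  have hch0 : 0 ≤ ch := h4 ▸ dotProduct_star_self_nonneg φ
  have hchre : ch = (c : ℂ) := Complex.ext rfl (Complex.nonneg_iff.mp hch0).2.symm
  have hc0 : (0:ℝ) ≤ c := (Complex.nonneg_iff.mp hch0).1
  have hsub : star (ψ - φ) ⬝ᵥ (ψ - φ) = 1 - ch := by
    simp only [star_sub, sub_dotProduct, dotProduct_sub, hψ, h2, h3, h4]
    ring
  have hc1 : c ≤ 1 := by
    have h := dotProduct_star_self_nonneg (ψ - φ)
    rw [hsub] at h
    have h' := (Complex.nonneg_iff.mp h).1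
    simp at h'
    linarith
  have hPAP : P * vecMulVec ψ (star ψ) * P = vecMulVec φ (star φ) := by
    rw [mul_vmv, vmv_mul, ← hstarφ]
  rw [hPAP]
  by_cases hx : c = 1
  · -- degenerate case: φ = ψ, matrix is zero
    have hv0 : ψ - φ = 0 := by
      apply dotProduct_star_self_eq_zero.mp
      rw [hsub, hchre, hx]
      norm_num
    have hφψ : φ = ψ := by
      have := sub_eq_zero.mp hv0
      exact this.symm
    rw [hφψ, sub_self]
    have h0 : ((0 : Matrix (Fin m) (Fin m) ℂ)) ^ 2 = (0 : Matrix (Fin m) (Fin m) ℂ)ᴴ * 0 := by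
      simp
    rw [traceNorm_eq_of_sq PosSemidef.zero h0, hx]
    norm_num
  · -- main case
    have hx0 : 0 < 1 - c := lt_of_le_of_ne (by linarith) (fun h => hx (by linarith))
    have h13 : (0:ℝ) < 1 + 3 * c := by linarith
    set D : ℝ := Real.sqrt ((1 - c) * (4 - 3 * (1 - c))) with hDdef
    have hDarg : (1 - c) * (4 - 3 * (1 - c)) = (1 - c) * (1 + 3 * c) := by ring
    have hDpos : 0 < D := Real.sqrt_pos.mpr (by rw [hDarg]; positivity)
    have hDne : D ≠ 0 := ne_of_gt hDpos
    have hD2 : D ^ 2 = (1 - c) * (1 + 3 * c) := by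
      rw [hDdef, Real.sq_sqrt (by rw [hDarg]; positivity), hDarg]
    set α : ℝ := (1 - c) / (2 * D) with hαdef
    set β : ℝ := (1 + 3 * c) / (2 * D) with hβdef
    have hα0 : 0 ≤ α := by positivity
    have hβ0 : 0 ≤ β := by positivity
    -- real coefficient identities
    have re1 : (α+β)^2 + 2*(α+β)*(α-β)*c + (α-β)^2*c = 1 := by
      rw [hαdef, hβdef]
      field_simp
      linear_combination (-4 : ℝ) * hD2
    have re2 : (α+β)*(α-β)*(1+c) + ((α+β)^2+(α-β)^2)*c = -c := by
      rw [hαdef, hβdef]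
      field_simp
      linear_combination (4 * c : ℝ) * hD2
    have re3 : (α-β)^2 + 2*(α+β)*(α-β)*c + (α+β)^2*c = c := by
      rw [hαdef, hβdef]
      field_simp
      linear_combination (-4 * c : ℝ) * hD2
    have retr : (α+β)*(1+c) + (α-β)*(2*c) = D := by
      rw [hαdef, hβdef]
      field_simp
      linear_combination (-2 : ℝ) * hD2
    set Pc : ℂ := ((α+β : ℝ) : ℂ) with hPcdef
    set Qc : ℂ := ((α-β : ℝ) : ℂ) with hQcdef
    have f1 : Pc^2 + 2*Pc*Qc*ch + Qc^2*ch = 1 := by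
      rw [hPcdef, hQcdef, hchre]
      exact_mod_cast congrArg (Complex.ofReal) re1
    have f2 : Pc*Qc*(1+ch) + (Pc^2+Qc^2)*ch = -ch := by
      rw [hPcdef, hQcdef, hchre]
      exact_mod_cast congrArg (Complex.ofReal) re2
    have f3 : Qc^2 + 2*Pc*Qc*ch + Pc^2*ch = ch := by
      rw [hPcdef, hQcdef, hchre]
      exact_mod_cast congrArg (Complex.ofReal) re3
    -- the square root candidate
    set u' : Fin m → ℂ := ((Real.sqrt α : ℝ) : ℂ) • (ψ + φ) with hu'def
    set v' : Fin m → ℂ := ((Real.sqrt β : ℝ) : ℂ) • (ψ - φ) with hv'def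
    set S : Matrix (Fin m) (Fin m) ℂ :=
      vecMulVec u' (star u') + vecMulVec v' (star v') with hSdef
    have hSpsd : S.PosSemidef := (psd_vmv u').add (psd_vmv v')
    have hSexp : S = Pc • (vecMulVec ψ (star ψ) + vecMulVec φ (star φ))
        + Qc • (vecMulVec ψ (star φ) + vecMulVec φ (star ψ)) := by
      rw [hSdef, hu'def, hv'def, habs α hα0, habs β hβ0, hPcdef, hQcdef]
      rw [show star (ψ + φ) = star ψ + star φ from star_add _ _,
        show star (ψ - φ) = star ψ - star φ from star_sub _ _]
      simp only [vmv_add_left, vmv_add_right, vmv_sub_left, vmv_sub_right]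
      push_cast
      module
    have hherm : (vecMulVec ψ (star ψ) - vecMulVec φ (star φ))ᴴ
        = vecMulVec ψ (star ψ) - vecMulVec φ (star φ) := by
      rw [conjTranspose_sub, vmv_herm, vmv_herm]
    have hsq : S ^ 2 = (vecMulVec ψ (star ψ) - vecMulVec φ (star φ))ᴴ
        * (vecMulVec ψ (star ψ) - vecMulVec φ (star φ)) := by
      rw [sq, hherm, hSexp]
      exact key ψ φ ch Pc Qc hψ h2 h3 h4 f1 f2 f3
    rw [traceNorm_eq_of_sq hSpsd hsq]
    -- compute the trace of S
    have htr : S.trace = Pc * (1 + ch) + Qc * (2 * ch) := by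
      rw [hSexp]
      simp only [trace_add, trace_smul, trace_vmv, hψ, h2, h3, h4, smul_eq_mul]
      ring
    rw [htr, hPcdef, hQcdef, hchre]
    rw [show (((α+β:ℝ)):ℂ) * (1 + (c:ℂ)) + ((α-β:ℝ):ℂ) * (2 * (c:ℂ))
        = (((α+β)*(1+c) + (α-β)*(2*c) : ℝ) : ℂ) by push_cast; ring]
    rw [retr, Complex.ofReal_re]
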